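/- Let p ∈ (1,∞), η ∈ (0, 2π), and let f : (−η/2, η/2) → ℝ be twice continuously differentiable with 4 f(θ)² + f'(θ)² > 0 for all θ ∈ (−η/2, η/2), and suppose f satisfies the ordinary differential equation 4 f(θ)²·[1 + 2 f(θ) + f''(θ)/p] + f'(θ)²·[1 + (2(3p−4)/p)·f(θ) + ((p−1)/p)·f''(θ)] = 0 on (−η/2, η/2). Define u on the wedge W_η by u(r cos θ, r sin θ) = r² f(θ) for r > 0 and θ ∈ (−η/2, η/2). Then |∇u(x)|² = r²·(4 f(θ)² + f'(θ)²) > 0 at every point x = (r cos θ, r sin θ) of W_η, and u satisfies (1/p)·Δu(x) + (1 − 2/p)·|∇u(x)|^{−2}·⟨∇u(x), (D²u(x))·∇u(x)⟩ = −1 for all x ∈ W_η. -/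

import Mathlib

open Set Real

/-- The planar wedge of angle `η`. -/
def wedge (η : ℝ) : Set (EuclideanSpace ℝ (Fin 2)) :=
  {x | ∃ r θ : ℝ, 0 < r ∧ -η/2 < θ ∧ θ < η/2 ∧
    x 0 = r * Real.cos θ ∧ x 1 = r * Real.sin θ}

/-- The point with polar coordinates `(r, θ)`. -/
noncomputable def ptOf (r θ : ℝ) : EuclideanSpace ℝ (Fin 2) :=
  (WithLp.equiv 2 (Fin 2 → ℝ)).symm ![r * Real.cos θ, r * Real.sin θ]

/-- The game `p`-Laplacian:
`Δ_p u (x) = (1/p)·Δu(x) + (1 − 2/p)·|∇u(x)|⁻²·⟨∇u(x), D²u(x)·∇u(x)⟩`. -/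
noncomputable def gameLap (p : ℝ) (u : EuclideanSpace ℝ (Fin 2) → ℝ)
    (x : EuclideanSpace ℝ (Fin 2)) : ℝ :=
  (1/p) * (∑ i : Fin 2,
      fderiv ℝ (fun z => gradient u z) x (EuclideanSpace.single i 1) i)
  + (1 - 2/p) * (‖gradient u x‖^2)⁻¹ *
      (inner ℝ (gradient u x) (fderiv ℝ (fun z => gradient u z) x (gradient u x)) : ℝ)

section Aux

abbrev E2 := EuclideanSpace ℝ (Fin 2)

noncomputable def lin2 (a b : ℝ) : E2 →L[ℝ] ℝ :=
  a • EuclideanSpace.proj (0 : Fin 2) + b • EuclideanSpace.proj (1 : Fin 2)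

@[simp] lemma lin2_apply (a b : ℝ) (y : E2) : lin2 a b y = a * y 0 + b * y 1 := rfl

/-- The local angle function. -/
noncomputable def Aa (θ₀ : ℝ) (y : E2) : ℝ :=
  θ₀ + Real.arctan ((-Real.sin θ₀ * y 0 + Real.cos θ₀ * y 1) /
    (Real.cos θ₀ * y 0 + Real.sin θ₀ * y 1))

lemma qpos (θ₀ : ℝ) (y : E2) (hd : 0 < Real.cos θ₀ * y 0 + Real.sin θ₀ * y 1) :
    (0:ℝ) < y 0 * y 0 + y 1 * y 1 := by
  have hcs : Real.sin θ₀ ^ 2 + Real.cos θ₀ ^ 2 = 1 := Real.sin_sq_add_cos_sq θ₀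
  nlinarith [mul_pos hd hd, sq_nonneg (-Real.sin θ₀ * y 0 + Real.cos θ₀ * y 1), hcs,
    sq_nonneg (y 0), sq_nonneg (y 1)]

lemma hasFDerivAt_Aa (θ₀ : ℝ) (y : E2) (hd : 0 < Real.cos θ₀ * y 0 + Real.sin θ₀ * y 1) :
    HasFDerivAt (Aa θ₀)
      (lin2 (-(y 1) / (y 0 * y 0 + y 1 * y 1)) (y 0 / (y 0 * y 0 + y 1 * y 1))) y := by
  set c := Real.cos θ₀ with hc
  set s := Real.sin θ₀ with hs
  have hE : HasFDerivAt (fun z : E2 => -s * z 0 + c * z 1) (lin2 (-s) c) y :=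
    (lin2 (-s) c).hasFDerivAt
  have hD : HasFDerivAt (fun z : E2 => c * z 0 + s * z 1) (lin2 c s) y :=
    (lin2 c s).hasFDerivAt
  have hinv : HasFDerivAt (fun z : E2 => (c * z 0 + s * z 1)⁻¹)
      ((-((c * y 0 + s * y 1) ^ 2)⁻¹) • lin2 c s) y :=
    (hasDerivAt_inv hd.ne').comp_hasFDerivAt y hD
  have hmul : HasFDerivAt (fun z : E2 => (-s * z 0 + c * z 1) * (c * z 0 + s * z 1)⁻¹)
      ((-s * y 0 + c * y 1) • ((-((c * y 0 + s * y 1) ^ 2)⁻¹) • lin2 c s)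
        + ((c * y 0 + s * y 1)⁻¹) • lin2 (-s) c) y := hE.mul hinv
  have harc := (Real.hasDerivAt_arctan
    ((-s * y 0 + c * y 1) * (c * y 0 + s * y 1)⁻¹)).comp_hasFDerivAt y hmul
  have hfin := harc.const_add θ₀
  have hfun : Aa θ₀ = fun z : E2 => θ₀ +
      ((Real.arctan ∘ fun z : E2 => (-s * z 0 + c * z 1) * (c * z 0 + s * z 1)⁻¹) z) := by
    funext z
    simp [Aa, Function.comp, div_eq_mul_inv, ← hc, ← hs]
  rw [hfun]
  refine hfin.congr_fderiv ?_
  refine ContinuousLinearMap.ext fun w => ?_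
  have hqpos : (0:ℝ) < y 0 * y 0 + y 1 * y 1 := qpos θ₀ y hd
  have hqne : y 0 * y 0 + y 1 * y 1 ≠ 0 := hqpos.ne'
  have hdne : c * y 0 + s * y 1 ≠ 0 := hd.ne'
  have hdne' : y 0 * c + s * y 1 ≠ 0 := by intro h; apply hdne; linarith
  have hqne2 : y 0 ^ 2 + y 1 ^ 2 ≠ 0 := by rw [sq, sq]; exact hqne
  simp only [lin2_apply, ContinuousLinearMap.smul_apply, ContinuousLinearMap.add_apply,
    smul_eq_mul]
  field_simp
  ring_nf

/-- The gradient vector field. -/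
noncomputable def Gv (f f' : ℝ → ℝ) (θ₀ : ℝ) (y : E2) : E2 :=
  (WithLp.equiv 2 (Fin 2 → ℝ)).symm
    ![2 * f (Aa θ₀ y) * y 0 - f' (Aa θ₀ y) * y 1,
      f' (Aa θ₀ y) * y 0 + 2 * f (Aa θ₀ y) * y 1]

@[simp] lemma Gv_apply0 (f f' : ℝ → ℝ) (θ₀ : ℝ) (y : E2) :
    Gv f f' θ₀ y 0 = 2 * f (Aa θ₀ y) * y 0 - f' (Aa θ₀ y) * y 1 := rfl

@[simp] lemma Gv_apply1 (f f' : ℝ → ℝ) (θ₀ : ℝ) (y : E2) :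
    Gv f f' θ₀ y 1 = f' (Aa θ₀ y) * y 0 + 2 * f (Aa θ₀ y) * y 1 := rfl

lemma hasGradientAt_v (f f' : ℝ → ℝ) (θ₀ : ℝ) (y : E2)
    (hd : 0 < Real.cos θ₀ * y 0 + Real.sin θ₀ * y 1)
    (hf'A : HasDerivAt f (f' (Aa θ₀ y)) (Aa θ₀ y)) :
    HasGradientAt (fun z : E2 => (z 0 * z 0 + z 1 * z 1) * f (Aa θ₀ z)) (Gv f f' θ₀ y) y := by
  have hqpos : (0:ℝ) < y 0 * y 0 + y 1 * y 1 := qpos θ₀ y hd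
  have hQ : HasFDerivAt (fun z : E2 => z 0 * z 0 + z 1 * z 1)
      (lin2 (y 0 + y 0) (y 1 + y 1)) y := by
    have h0 : HasFDerivAt (fun z : E2 => z 0) (lin2 1 0) y := by
      have := (EuclideanSpace.proj (0 : Fin 2) : E2 →L[ℝ] ℝ).hasFDerivAt (x := y)
      refine this.congr_fderiv ?_
      exact ContinuousLinearMap.ext fun w => by simp
    have h1 : HasFDerivAt (fun z : E2 => z 1) (lin2 0 1) y := by
      have := (EuclideanSpace.proj (1 : Fin 2) : E2 →L[ℝ] ℝ).hasFDerivAt (x := y)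
      refine this.congr_fderiv ?_
      exact ContinuousLinearMap.ext fun w => by simp
    have := (h0.mul h0).add (h1.mul h1)
    refine this.congr_fderiv ?_
    refine ContinuousLinearMap.ext fun w => ?_
    simp only [lin2_apply, ContinuousLinearMap.smul_apply, ContinuousLinearMap.add_apply,
      smul_eq_mul]
    ring
  have hA := hasFDerivAt_Aa θ₀ y hd
  have hfA : HasFDerivAt (fun z : E2 => f (Aa θ₀ z))
      ((f' (Aa θ₀ y)) • lin2 (-(y 1) / (y 0 * y 0 + y 1 * y 1))
        (y 0 / (y 0 * y 0 + y 1 * y 1))) y :=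
    hf'A.comp_hasFDerivAt y hA
  have hmul := hQ.mul hfA
  have key : ((y 0 * y 0 + y 1 * y 1) •
        ((f' (Aa θ₀ y)) • lin2 (-(y 1) / (y 0 * y 0 + y 1 * y 1)) (y 0 / (y 0 * y 0 + y 1 * y 1)))
      + (f (Aa θ₀ y)) • lin2 (y 0 + y 0) (y 1 + y 1))
      = (InnerProductSpace.toDual ℝ E2) (Gv f f' θ₀ y) := by
    refine ContinuousLinearMap.ext fun w => ?_
    have hqne : y 0 * y 0 + y 1 * y 1 ≠ 0 := hqpos.ne'
    have hqne2 : y 0 ^ 2 + y 1 ^ 2 ≠ 0 := by rw [sq, sq]; exact hqne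
    simp only [lin2_apply, ContinuousLinearMap.smul_apply, ContinuousLinearMap.add_apply,
      smul_eq_mul, InnerProductSpace.toDual_apply_apply, PiLp.inner_apply, RCLike.inner_apply,
      starRingEnd_apply, star_trivial, Fin.sum_univ_two, Gv_apply0, Gv_apply1]
    field_simp
    ring
  rw [HasGradientAt, HasGradientAtFilter, ← key]
  exact hmul

@[simp] lemma ptOf_apply0 (r θ : ℝ) : ptOf r θ 0 = r * Real.cos θ := rfl
@[simp] lemma ptOf_apply1 (r θ : ℝ) : ptOf r θ 1 = r * Real.sin θ := rfl

lemma Aa_self (θ₀ r : ℝ) : Aa θ₀ (ptOf r θ₀) = θ₀ := by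
  simp only [Aa, ptOf_apply0, ptOf_apply1]
  rw [show -Real.sin θ₀ * (r * Real.cos θ₀) + Real.cos θ₀ * (r * Real.sin θ₀) = 0 by ring,
    zero_div, Real.arctan_zero, add_zero]

/-- The second-derivative (Hessian) map at `ptOf r θ₀`. -/
noncomputable def DG (f f' f'' : ℝ → ℝ) (θ₀ : ℝ) : E2 →L[ℝ] E2 :=
  (EuclideanSpace.equiv (Fin 2) ℝ).symm.toContinuousLinearMap.comp
    (ContinuousLinearMap.pi
      ![lin2 (2 * f θ₀ - 2 * f' θ₀ * Real.sin θ₀ * Real.cos θ₀ + f'' θ₀ * Real.sin θ₀ ^ 2)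
             (2 * f' θ₀ * Real.cos θ₀ ^ 2 - f'' θ₀ * Real.cos θ₀ * Real.sin θ₀ - f' θ₀),
        lin2 (f' θ₀ - f'' θ₀ * Real.sin θ₀ * Real.cos θ₀ - 2 * f' θ₀ * Real.sin θ₀ ^ 2)
             (f'' θ₀ * Real.cos θ₀ ^ 2 + 2 * f' θ₀ * Real.cos θ₀ * Real.sin θ₀ + 2 * f θ₀)])

@[simp] lemma DG_apply (f f' f'' : ℝ → ℝ) (θ₀ : ℝ) (w : E2) (i : Fin 2) :
    DG f f' f'' θ₀ w i =
      (![lin2 (2 * f θ₀ - 2 * f' θ₀ * Real.sin θ₀ * Real.cos θ₀ + f'' θ₀ * Real.sin θ₀ ^ 2)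
             (2 * f' θ₀ * Real.cos θ₀ ^ 2 - f'' θ₀ * Real.cos θ₀ * Real.sin θ₀ - f' θ₀),
        lin2 (f' θ₀ - f'' θ₀ * Real.sin θ₀ * Real.cos θ₀ - 2 * f' θ₀ * Real.sin θ₀ ^ 2)
             (f'' θ₀ * Real.cos θ₀ ^ 2 + 2 * f' θ₀ * Real.cos θ₀ * Real.sin θ₀ + 2 * f θ₀)] i)
        w := rfl

lemma hasFDerivAt_Gv (f f' f'' : ℝ → ℝ) (θ₀ r : ℝ) (hr : 0 < r)
    (hf : HasDerivAt f (f' θ₀) θ₀) (hf2 : HasDerivAt f' (f'' θ₀) θ₀) :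
    HasFDerivAt (Gv f f' θ₀) (DG f f' f'' θ₀) (ptOf r θ₀) := by
  set x₀ : E2 := ptOf r θ₀ with hx₀
  have hcs : Real.sin θ₀ ^ 2 + Real.cos θ₀ ^ 2 = 1 := Real.sin_sq_add_cos_sq θ₀
  have hx0 : x₀ 0 = r * Real.cos θ₀ := rfl
  have hx1 : x₀ 1 = r * Real.sin θ₀ := rfl
  have hd : 0 < Real.cos θ₀ * x₀ 0 + Real.sin θ₀ * x₀ 1 := by
    rw [hx0, hx1]; nlinarith [hcs]
  have hq : x₀ 0 * x₀ 0 + x₀ 1 * x₀ 1 = r ^ 2 := by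
    rw [hx0, hx1]; nlinarith [hcs]
  have hA := hasFDerivAt_Aa θ₀ x₀ hd
  have hAx : Aa θ₀ x₀ = θ₀ := Aa_self θ₀ r
  have hfA : HasFDerivAt (fun z : E2 => f (Aa θ₀ z))
      ((f' θ₀) • lin2 (-(x₀ 1) / (x₀ 0 * x₀ 0 + x₀ 1 * x₀ 1))
        (x₀ 0 / (x₀ 0 * x₀ 0 + x₀ 1 * x₀ 1))) x₀ :=
    hf.comp_hasFDerivAt_of_eq x₀ hA hAx.symm
  have hf'A : HasFDerivAt (fun z : E2 => f' (Aa θ₀ z))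
      ((f'' θ₀) • lin2 (-(x₀ 1) / (x₀ 0 * x₀ 0 + x₀ 1 * x₀ 1))
        (x₀ 0 / (x₀ 0 * x₀ 0 + x₀ 1 * x₀ 1))) x₀ :=
    hf2.comp_hasFDerivAt_of_eq x₀ hA hAx.symm
  have h0 : HasFDerivAt (fun z : E2 => z 0) (lin2 1 0) x₀ := by
    have := (EuclideanSpace.proj (0 : Fin 2) : E2 →L[ℝ] ℝ).hasFDerivAt (x := x₀)
    refine this.congr_fderiv ?_
    exact ContinuousLinearMap.ext fun w => by simp
  have h1 : HasFDerivAt (fun z : E2 => z 1) (lin2 0 1) x₀ := by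
    have := (EuclideanSpace.proj (1 : Fin 2) : E2 →L[ℝ] ℝ).hasFDerivAt (x := x₀)
    refine this.congr_fderiv ?_
    exact ContinuousLinearMap.ext fun w => by simp
  have hG0 : HasFDerivAt (fun z : E2 => 2 * f (Aa θ₀ z) * z 0 - f' (Aa θ₀ z) * z 1)
      (lin2 (2 * f θ₀ - 2 * f' θ₀ * Real.sin θ₀ * Real.cos θ₀ + f'' θ₀ * Real.sin θ₀ ^ 2)
            (2 * f' θ₀ * Real.cos θ₀ ^ 2 - f'' θ₀ * Real.cos θ₀ * Real.sin θ₀ - f' θ₀)) x₀ := by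
    have := ((hfA.const_mul 2).mul h0).sub (hf'A.mul h1)
    refine this.congr_fderiv ?_
    refine ContinuousLinearMap.ext fun w => ?_
    simp only [lin2_apply, ContinuousLinearMap.smul_apply, ContinuousLinearMap.add_apply,
      ContinuousLinearMap.sub_apply, smul_eq_mul, hAx, hq]
    simp only [hx0, hx1]
    have hrne : r ≠ 0 := hr.ne'
    field_simp
    ring
  have hG1 : HasFDerivAt (fun z : E2 => f' (Aa θ₀ z) * z 0 + 2 * f (Aa θ₀ z) * z 1)
      (lin2 (f' θ₀ - f'' θ₀ * Real.sin θ₀ * Real.cos θ₀ - 2 * f' θ₀ * Real.sin θ₀ ^ 2)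
            (f'' θ₀ * Real.cos θ₀ ^ 2 + 2 * f' θ₀ * Real.cos θ₀ * Real.sin θ₀ + 2 * f θ₀)) x₀ := by
    have := (hf'A.mul h0).add ((hfA.const_mul 2).mul h1)
    refine this.congr_fderiv ?_
    refine ContinuousLinearMap.ext fun w => ?_
    simp only [lin2_apply, ContinuousLinearMap.smul_apply, ContinuousLinearMap.add_apply,
      smul_eq_mul, hAx, hq]
    simp only [hx0, hx1]
    have hrne : r ≠ 0 := hr.ne'
    field_simp
    ring
  have hΦ : HasFDerivAt (fun z : E2 => (![2 * f (Aa θ₀ z) * z 0 - f' (Aa θ₀ z) * z 1,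
        f' (Aa θ₀ z) * z 0 + 2 * f (Aa θ₀ z) * z 1] : Fin 2 → ℝ))
      (ContinuousLinearMap.pi
        ![lin2 (2 * f θ₀ - 2 * f' θ₀ * Real.sin θ₀ * Real.cos θ₀ + f'' θ₀ * Real.sin θ₀ ^ 2)
               (2 * f' θ₀ * Real.cos θ₀ ^ 2 - f'' θ₀ * Real.cos θ₀ * Real.sin θ₀ - f' θ₀),
          lin2 (f' θ₀ - f'' θ₀ * Real.sin θ₀ * Real.cos θ₀ - 2 * f' θ₀ * Real.sin θ₀ ^ 2)
               (f'' θ₀ * Real.cos θ₀ ^ 2 + 2 * f' θ₀ * Real.cos θ₀ * Real.sin θ₀ + 2 * f θ₀)])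
      x₀ := by
    apply hasFDerivAt_pi''
    intro i
    fin_cases i
    · rw [ContinuousLinearMap.proj_pi]; exact hG0
    · rw [ContinuousLinearMap.proj_pi]; exact hG1
  have hcomp := ((EuclideanSpace.equiv (Fin 2) ℝ).symm.toContinuousLinearMap).hasFDerivAt.comp
    x₀ hΦ
  have hfun : Gv f f' θ₀ = ⇑(EuclideanSpace.equiv (Fin 2) ℝ).symm.toContinuousLinearMap ∘
      (fun z : E2 => (![2 * f (Aa θ₀ z) * z 0 - f' (Aa θ₀ z) * z 1,
        f' (Aa θ₀ z) * z 0 + 2 * f (Aa θ₀ z) * z 1] : Fin 2 → ℝ)) := rfl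
  rw [DG, hfun]
  exact hcomp

end Aux

theorem ode_gives_pde_solution
    (p η : ℝ) (hp : 1 < p) (hη : η ∈ Set.Ioo 0 (2*Real.pi))
    (f f' f'' : ℝ → ℝ)
    (hf' : ∀ θ ∈ Set.Ioo (-η/2) (η/2), HasDerivAt f (f' θ) θ)
    (hf'' : ∀ θ ∈ Set.Ioo (-η/2) (η/2), HasDerivAt f' (f'' θ) θ)
    (hf''c : ContinuousOn f'' (Set.Ioo (-η/2) (η/2)))
    (hpos : ∀ θ ∈ Set.Ioo (-η/2) (η/2), 0 < 4*(f θ)^2 + (f' θ)^2)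
    (hode : ∀ θ ∈ Set.Ioo (-η/2) (η/2),
      4*(f θ)^2 * (1 + 2*f θ + f'' θ / p)
        + (f' θ)^2 * (1 + (2*(3*p-4)/p)*f θ + ((p-1)/p)*f'' θ) = 0)
    (u : EuclideanSpace ℝ (Fin 2) → ℝ)
    (hu : ∀ r θ : ℝ, 0 < r → θ ∈ Set.Ioo (-η/2) (η/2) → u (ptOf r θ) = r^2 * f θ) :
    ∀ r θ : ℝ, 0 < r → θ ∈ Set.Ioo (-η/2) (η/2) →
      ‖gradient u (ptOf r θ)‖^2 = r^2 * (4*(f θ)^2 + (f' θ)^2) ∧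
      0 < ‖gradient u (ptOf r θ)‖^2 ∧
      gameLap p u (ptOf r θ) = -1 := by
  intro r θ hr hθ
  have hcs : Real.sin θ ^ 2 + Real.cos θ ^ 2 = 1 := Real.sin_sq_add_cos_sq θ
  have hpne : p ≠ 0 := by positivity
  -- the open neighbourhood
  set U : Set E2 := {y | 0 < Real.cos θ * y 0 + Real.sin θ * y 1} with hU
  set N : Set E2 := U ∩ (Aa θ) ⁻¹' (Set.Ioo (-η/2) (η/2)) with hN
  have hDc : Continuous (fun y : E2 => Real.cos θ * y 0 + Real.sin θ * y 1) :=
    (lin2 (Real.cos θ) (Real.sin θ)).continuous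
  have hUo : IsOpen U := isOpen_lt continuous_const hDc
  have hAc : ContinuousOn (Aa θ) U := by
    show ContinuousOn (fun y : E2 => θ + Real.arctan ((-Real.sin θ * y 0 + Real.cos θ * y 1) /
      (Real.cos θ * y 0 + Real.sin θ * y 1))) U
    refine continuousOn_const.add (Real.continuous_arctan.comp_continuousOn ?_)
    exact ContinuousOn.div ((lin2 (-Real.sin θ) (Real.cos θ)).continuous.continuousOn)
      hDc.continuousOn (fun y hy => ne_of_gt hy)
  have hNo : IsOpen N := hAc.isOpen_inter_preimage hUo isOpen_Ioo
  have hAx : Aa θ (ptOf r θ) = θ := Aa_self θ r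
  have hx₀U : ptOf r θ ∈ U := by
    show 0 < Real.cos θ * (ptOf r θ) 0 + Real.sin θ * (ptOf r θ) 1
    rw [ptOf_apply0, ptOf_apply1]
    nlinarith [hcs]
  have hx₀N : ptOf r θ ∈ N := ⟨hx₀U, by rw [Set.mem_preimage, hAx]; exact hθ⟩
  -- u agrees with the explicit function on N
  have huv : ∀ y ∈ N, u y = (y 0 * y 0 + y 1 * y 1) * f (Aa θ y) := by
    rintro y ⟨hyU, hyA⟩
    have hyU' : 0 < Real.cos θ * y 0 + Real.sin θ * y 1 := hyU
    have hq : (0:ℝ) < y 0 * y 0 + y 1 * y 1 := qpos θ y hyU'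
    have hρ : 0 < Real.sqrt (y 0 * y 0 + y 1 * y 1) := Real.sqrt_pos.2 hq
    have hrep : y = ptOf (Real.sqrt (y 0 * y 0 + y 1 * y 1)) (Aa θ y) := by
      have hdne : Real.cos θ * y 0 + Real.sin θ * y 1 ≠ 0 := hyU'.ne'
      have hρne : Real.sqrt (y 0 * y 0 + y 1 * y 1) ≠ 0 := hρ.ne'
      have hdne' : y 0 * Real.cos θ + y 1 * Real.sin θ ≠ 0 := by intro h; apply hdne; linarith
      have hdne'' : y 1 * Real.sin θ + y 0 * Real.cos θ ≠ 0 := by intro h; apply hdne; linarith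
      have hρne2 : Real.sqrt (y 0 ^ 2 + y 1 ^ 2) ≠ 0 := by rw [sq, sq]; exact hρne
      have h1t : 1 + ((-Real.sin θ * y 0 + Real.cos θ * y 1) /
          (Real.cos θ * y 0 + Real.sin θ * y 1)) ^ 2
          = (y 0 * y 0 + y 1 * y 1) / (Real.cos θ * y 0 + Real.sin θ * y 1) ^ 2 := by
        rw [div_pow, eq_div_iff (pow_ne_zero 2 hdne), add_mul, div_mul_cancel₀ _ (pow_ne_zero 2 hdne)]
        linear_combination (y 0 * y 0 + y 1 * y 1) * hcs
      have hsq : Real.sqrt (1 + ((-Real.sin θ * y 0 + Real.cos θ * y 1) /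
          (Real.cos θ * y 0 + Real.sin θ * y 1)) ^ 2)
          = Real.sqrt (y 0 * y 0 + y 1 * y 1) / (Real.cos θ * y 0 + Real.sin θ * y 1) := by
        rw [h1t, Real.sqrt_div hq.le, Real.sqrt_sq hyU'.le]
      ext i
      fin_cases i
      · show y 0 = Real.sqrt (y 0 * y 0 + y 1 * y 1) * Real.cos (Aa θ y)
        rw [Aa, Real.cos_add, Real.cos_arctan, Real.sin_arctan, hsq]
        field_simp
        linear_combination (-(y 0)) * hcs
      · show y 1 = Real.sqrt (y 0 * y 0 + y 1 * y 1) * Real.sin (Aa θ y)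
        rw [Aa, Real.sin_add, Real.cos_arctan, Real.sin_arctan, hsq]
        field_simp
        linear_combination (-(y 1)) * hcs
    calc u y = u (ptOf (Real.sqrt (y 0 * y 0 + y 1 * y 1)) (Aa θ y)) := by rw [← hrep]
      _ = (Real.sqrt (y 0 * y 0 + y 1 * y 1)) ^ 2 * f (Aa θ y) := hu _ _ hρ hyA
      _ = (y 0 * y 0 + y 1 * y 1) * f (Aa θ y) := by rw [Real.sq_sqrt hq.le]
  -- gradient of u on N
  have hgrad : ∀ y ∈ N, gradient u y = Gv f f' θ y := by
    rintro y hy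
    have hvg := hasGradientAt_v f f' θ y hy.1 (hf' (Aa θ y) hy.2)
    have huN : u =ᶠ[nhds y] (fun z : E2 => (z 0 * z 0 + z 1 * z 1) * f (Aa θ z)) :=
      Filter.eventuallyEq_of_mem (hNo.mem_nhds hy) huv
    have hufd : HasFDerivAt u ((InnerProductSpace.toDual ℝ E2) (Gv f f' θ y)) y :=
      hvg.hasFDerivAt.congr_of_eventuallyEq huN
    simp only [gradient, hufd.fderiv, LinearIsometryEquiv.symm_apply_apply]
  have hgradx : gradient u (ptOf r θ) = Gv f f' θ (ptOf r θ) := hgrad _ hx₀N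
  have hgeq : (fun z : E2 => gradient u z) =ᶠ[nhds (ptOf r θ)] Gv f f' θ :=
    Filter.eventuallyEq_of_mem (hNo.mem_nhds hx₀N) hgrad
  have hDGd := hasFDerivAt_Gv f f' f'' θ r hr (hf' θ hθ) (hf'' θ hθ)
  have hfd : fderiv ℝ (fun z : E2 => gradient u z) (ptOf r θ) = DG f f' f'' θ :=
    hgeq.fderiv_eq.trans hDGd.fderiv
  -- norm of gradient
  have h1 : ‖gradient u (ptOf r θ)‖^2 = r^2 * (4*(f θ)^2 + (f' θ)^2) := by
    rw [hgradx, ← real_inner_self_eq_norm_sq]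
    simp only [PiLp.inner_apply, RCLike.inner_apply, starRingEnd_apply, star_trivial,
      Fin.sum_univ_two, Gv_apply0, Gv_apply1, hAx, ptOf_apply0, ptOf_apply1]
    linear_combination (r^2 * (4*(f θ)^2 + (f' θ)^2)) * hcs
  refine ⟨h1, ?_, ?_⟩
  · rw [h1]
    exact mul_pos (pow_pos hr 2) (hpos θ hθ)
  · have hSne : (4*(f θ)^2 + (f' θ)^2) ≠ 0 := (hpos θ hθ).ne'
    have hrne : r ≠ 0 := hr.ne'
    have hsum : ∑ i : Fin 2,
        fderiv ℝ (fun z => gradient u z) (ptOf r θ) (EuclideanSpace.single i 1) i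
        = 4 * f θ + f'' θ := by
      rw [hfd]
      simp only [Fin.sum_univ_two, DG_apply, Matrix.cons_val_zero, Matrix.cons_val_one,
        Matrix.head_cons, lin2_apply, EuclideanSpace.single_apply]
      norm_num
      linear_combination (f'' θ) * hcs
    have hinner : (inner ℝ (gradient u (ptOf r θ))
        (fderiv ℝ (fun z => gradient u z) (ptOf r θ) (gradient u (ptOf r θ))) : ℝ)
        = r^2 * (8*(f θ)^3 + 6*(f θ)*(f' θ)^2 + (f'' θ)*(f' θ)^2) := by
      rw [hfd, hgradx]
      simp only [PiLp.inner_apply, RCLike.inner_apply, starRingEnd_apply, star_trivial,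
        Fin.sum_univ_two, DG_apply, Matrix.cons_val_zero, Matrix.cons_val_one,
        Matrix.head_cons, lin2_apply, Gv_apply0, Gv_apply1, hAx, ptOf_apply0, ptOf_apply1]
      linear_combination (r^2*((f' θ)^2*(f'' θ) + 6*(f θ)*(f' θ)^2 + 8*(f θ)^3
        + (Real.sin θ^2 + Real.cos θ^2) * ((f' θ)^2*(f'' θ) + 4*(f θ)*(f' θ)^2))) * hcs
    rw [gameLap, hsum, h1, hinner]
    have hode' := hode θ hθ
    field_simp
    field_simp at hode'
    linear_combination hode'
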